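/- Let F be a field, t a natural number, S a finite set of pairwise distinct nonzero elements of F with |S| ≤ t, and y : S → F an assignment of share values. Then for any two secrets a, a' ∈ F, the map f ↦ f + (a' − a) · g, where g = ∏_{x ∈ S} (1 − X/x), is a bijection from the set of polynomials f ∈ F[X] with degree f ≤ t, f(0) = a, and f(x) = y(x) for all x ∈ S onto the corresponding set with f(0) = a'. In particular these two sets of consistent sharing polynomials are in bijection, so at most t shares of a threshold-t Shamir sharing make all values of the secret equally likely. -/

import Mathlib

open Polynomial

lemma shamir_g_deg (F : Type*) [Field F] (t : ℕ) (S : Finset F) (hcard : S.card ≤ t) :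
    (∏ x ∈ S, (1 - Polynomial.C x⁻¹ * Polynomial.X)).degree ≤ (t : WithBot ℕ) := by
  refine le_trans (Polynomial.degree_le_natDegree) ?_
  have h1 : (∏ x ∈ S, (1 - Polynomial.C x⁻¹ * Polynomial.X)).natDegree ≤ t := by
    refine le_trans (Polynomial.natDegree_prod_le _ _) (le_trans ?_ hcard)
    calc ∑ x ∈ S, (1 - Polynomial.C x⁻¹ * Polynomial.X).natDegree
        ≤ ∑ _x ∈ S, 1 := by
          refine Finset.sum_le_sum fun x _ => ?_
          refine le_trans (Polynomial.natDegree_sub_le _ _) ?_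
          simp [Polynomial.natDegree_C_mul_le, le_trans (Polynomial.natDegree_mul_le)
            (by simp : (Polynomial.C x⁻¹).natDegree + Polynomial.X.natDegree ≤ 1)]
      _ = S.card := by simp
  exact_mod_cast h1

lemma shamir_g_eval0 (F : Type*) [Field F] (S : Finset F) :
    (∏ x ∈ S, (1 - Polynomial.C x⁻¹ * Polynomial.X)).eval 0 = 1 := by
  simp [Polynomial.eval_prod]

lemma shamir_g_eval (F : Type*) [Field F] (S : Finset F) (hS : ∀ x ∈ S, x ≠ 0)
    {x : F} (hx : x ∈ S) :
    (∏ z ∈ S, (1 - Polynomial.C z⁻¹ * Polynomial.X)).eval x = 0 := by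
  rw [Polynomial.eval_prod]
  refine Finset.prod_eq_zero hx ?_
  simp [inv_mul_cancel₀ (hS x hx)]

/-- Perfect privacy of Shamir secret sharing, bijection version: for a set `S`
of at most `t` pairwise distinct nonzero points with share values `y`, the map
`f ↦ f + (a' − a) · g` with `g = ∏_{x ∈ S} (1 − X/x)` is a bijection from the
sharing polynomials consistent with secret `a` onto those consistent with
secret `a'`. -/
theorem shamir_privacy_bijection (F : Type*) [Field F] (t : ℕ) (S : Finset F)
    (hS : ∀ x ∈ S, x ≠ 0) (hcard : S.card ≤ t) (y : F → F) (a a' : F) :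
    Set.BijOn
      (fun f : Polynomial F =>
        f + Polynomial.C (a' - a) * ∏ x ∈ S, (1 - Polynomial.C x⁻¹ * Polynomial.X))
      {f | f.degree ≤ (t : WithBot ℕ) ∧ f.eval 0 = a ∧ ∀ x ∈ S, f.eval x = y x}
      {f | f.degree ≤ (t : WithBot ℕ) ∧ f.eval 0 = a' ∧ ∀ x ∈ S, f.eval x = y x} := by
  set g : Polynomial F := ∏ x ∈ S, (1 - Polynomial.C x⁻¹ * Polynomial.X) with hg
  have hgdeg := shamir_g_deg F t S hcard
  have hg0 := shamir_g_eval0 F S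
  have hdeg : ∀ b : F, (Polynomial.C b * g).degree ≤ (t : WithBot ℕ) := fun b => by
    refine le_trans (Polynomial.degree_mul_le _ _) ?_
    rcases eq_or_ne b 0 with rfl | hb
    · simp
    · rw [Polynomial.degree_C hb, zero_add]; exact hgdeg
  have hmem : ∀ (b c : F) (f : Polynomial F),
      f ∈ {f : Polynomial F | f.degree ≤ (t : WithBot ℕ) ∧ f.eval 0 = b ∧ ∀ x ∈ S, f.eval x = y x} →
      f + Polynomial.C c * g ∈ {f : Polynomial F | f.degree ≤ (t : WithBot ℕ) ∧
        f.eval 0 = b + c ∧ ∀ x ∈ S, f.eval x = y x} := by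
    rintro b c f ⟨h1, h2, h3⟩
    refine ⟨le_trans (Polynomial.degree_add_le _ _) (max_le h1 (hdeg c)), ?_, ?_⟩
    · simp [h2, hg0, hg]
    · intro x hx
      simp [shamir_g_eval F S hS hx, h3 x hx, hg]
  refine ⟨fun f hf => ?_, fun f₁ _ f₂ _ h => by simpa using h, fun f hf => ?_⟩
  · have := hmem a (a' - a) f hf
    simpa using this
  · refine ⟨f + Polynomial.C (a - a') * g, ?_, ?_⟩
    · have := hmem a' (a - a') f hf
      simpa using this
    · simp only
      rw [add_assoc, ← add_mul, ← Polynomial.C_add]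
      simp [← hg]
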